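/- If F is a finite transducer, ω is eventually strongly almost periodic, and F(ω) is infinite, then F(ω) is eventually strongly almost periodic. -/

import Mathlib

/-- The factor of `ω` starting at `i` of length `n`. -/
def seg {α : Type*} (ω : ℕ → α) (i n : ℕ) : List α :=
  (List.range n).map (fun k => ω (i + k))

/-- `x` occurs in `ω` at position `i`. -/
def OccursAt {α : Type*} (ω : ℕ → α) (x : List α) (i : ℕ) : Prop :=
  seg ω i x.length = x

/-- Strongly almost periodic: every factor occurs in every sufficiently long factor. -/
def SAP {α : Type*} (ω : ℕ → α) : Prop :=
  ∀ x : List α, (∃ i, OccursAt ω x i) →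
    ∃ l, ∀ j, ∃ i, j ≤ i ∧ i + x.length ≤ j + l ∧ OccursAt ω x i

/-- Almost periodic: every factor occurring infinitely often occurs in every
sufficiently long factor. -/
def AP {α : Type*} (ω : ℕ → α) : Prop :=
  ∀ x : List α, {i | OccursAt ω x i}.Infinite →
    ∃ l, ∀ j, ∃ i, j ≤ i ∧ i + x.length ≤ j + l ∧ OccursAt ω x i

/-- Eventually strongly almost periodic: some suffix is strongly almost periodic. -/
def EAP {α : Type*} (ω : ℕ → α) : Prop :=
  ∃ n, SAP (fun i => ω (n + i))

/-- The state sequence of a finite transducer with transition `f` and initial state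
`q0` on input `ω`. -/
def transStates {σ δ q : Type*} (f : q → σ → q × List δ) (q0 : q) (ω : ℕ → σ) : ℕ → q
  | 0 => q0
  | n + 1 => (f (transStates f q0 ω n) (ω n)).1

/-- The partial output `v_0 v_1 ⋯ v_{n-1}` of a finite transducer. -/
def transPartial {σ δ q : Type*} (f : q → σ → q × List δ) (q0 : q) (ω : ℕ → σ) (n : ℕ) :
    List δ :=
  ((List.range n).map (fun k => (f (transStates f q0 ω k) (ω k)).2)).flatten



section SegLemmas
variable {α β : Type*}

@[simp] theorem seg_length (ω : ℕ → α) (i n : ℕ) : (seg ω i n).length = n := by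
  simp [seg]

theorem seg_getElem (ω : ℕ → α) (i n k : ℕ) (h : k < n) :
    (seg ω i n)[k]'(by simpa using h) = ω (i + k) := by
  simp [seg]

theorem seg_eq_iff {ω ω' : ℕ → α} {i j n : ℕ} :
    seg ω i n = seg ω' j n ↔ ∀ k < n, ω (i + k) = ω' (j + k) := by
  constructor
  · intro h k hk
    have := congrArg (fun l => l[k]?) h
    simpa [seg, hk] using this
  · intro h
    apply List.ext_getElem (by simp)
    intro k h1 h2
    rw [seg_getElem ω i n k (by simpa using h1), seg_getElem ω' j n k (by simpa using h1)]
    exact h k (by simpa using h1)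

theorem occursAt_iff {ω : ℕ → α} {u : List α} {i : ℕ} :
    OccursAt ω u i ↔ ∀ k (h : k < u.length), ω (i + k) = u[k] := by
  unfold OccursAt
  constructor
  · intro h k hk
    have h2 := congrArg (fun l => l[k]?) h
    simpa [seg, hk, List.getElem?_eq_getElem] using h2
  · intro h
    apply List.ext_getElem (by simp)
    intro k h1 h2
    rw [seg_getElem ω i _ k (by simpa using h1)]
    exact h k h2

theorem occursAt_seg (ω : ℕ → α) (m k : ℕ) : OccursAt ω (seg ω m k) m := by
  unfold OccursAt
  rw [seg_length]

theorem seg_append (ω : ℕ → α) (i a b : ℕ) :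
    seg ω i (a + b) = seg ω i a ++ seg ω (i + a) b := by
  unfold seg
  rw [List.range_add, List.map_append, List.map_map]
  congr 1
  apply congrArg (List.map · (List.range b))
  funext k
  show ω (i + (a + k)) = ω (i + a + k)
  congr 1
  omega

theorem seg_map (θ : α → β) (w : ℕ → α) (i n : ℕ) :
    seg (fun t => θ (w t)) i n = (seg w i n).map θ := by
  simp [seg, List.map_map]

theorem seg_shift (ω : ℕ → α) (c i n : ℕ) :
    seg (fun t => ω (c + t)) i n = seg ω (c + i) n := by
  apply seg_eq_iff.2
  intro k hk
  congr 1
  omega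

theorem sap_slidingBlock {x : ℕ → α} (hx : SAP x) (K : ℕ) (Φ : List α → β) :
    SAP (fun n => Φ (seg x n (K + 1))) := by
  intro v ⟨m, hm⟩
  set w := fun n => Φ (seg x n (K + 1)) with hw
  set k := v.length with hk
  obtain ⟨l, hl⟩ := hx (seg x m (k + K)) ⟨m, occursAt_seg _ _ _⟩
  refine ⟨l, fun j => ?_⟩
  obtain ⟨i, hji, hil, hocc⟩ := hl j
  rw [seg_length] at hil
  refine ⟨i, hji, by omega, ?_⟩
  have hptw : ∀ r < k + K, x (i + r) = x (m + r) := by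
    intro r hr
    have := occursAt_iff.1 hocc r (by simpa using hr)
    rw [this, seg_getElem x m _ r (by simpa using hr)]
  have : seg w i k = seg w m k := by
    apply seg_eq_iff.2
    intro t ht
    show Φ (seg x (i+t) (K+1)) = Φ (seg x (m+t) (K+1))
    congr 1
    apply seg_eq_iff.2
    intro s hs
    have h1 : i + t + s = i + (t + s) := by omega
    have h2 : m + t + s = m + (t + s) := by omega
    rw [h1, h2]
    exact hptw (t + s) (by omega)
  unfold OccursAt
  rw [← hk, this]
  exact hm

theorem sap_map {x : ℕ → α} (hx : SAP x) (θ : α → β) : SAP (fun n => θ (x n)) := by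
  have h := sap_slidingBlock hx 0 (fun l => θ (l.getD 0 (x 0)))
  have : (fun n => (fun l => θ (l.getD 0 (x 0))) (seg x n (0 + 1))) = fun n => θ (x n) := by
    funext n
    simp [seg]
  rwa [this] at h

end SegLemmas

set_option linter.unusedSectionVars false

section Dyn
open Set Topology

variable {C : Type*} [TopologicalSpace C] [DiscreteTopology C]

def shiftBy (m : ℕ) (f : ℕ → C) : ℕ → C := fun i => f (m + i)

def Sh (f : ℕ → C) : ℕ → C := fun i => f (i + 1)

theorem continuous_Sh : Continuous (Sh (C := C)) :=
  continuous_pi fun i => continuous_apply (i + 1)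

theorem continuous_shiftBy (m : ℕ) : Continuous (shiftBy (C := C) m) :=
  continuous_pi fun i => continuous_apply (m + i)

theorem Sh_shiftBy (m : ℕ) (f : ℕ → C) : Sh (shiftBy m f) = shiftBy (m + 1) f := by
  funext i; show f (m + (i + 1)) = f (m + 1 + i); congr 1; omega

theorem shiftBy_zero (f : ℕ → C) : shiftBy 0 f = f :=
  funext fun i => congrArg f (Nat.zero_add i)

theorem shiftBy_Sh (n : ℕ) (f : ℕ → C) : shiftBy n (Sh f) = shiftBy (n + 1) f := by
  funext i; show f (n + i + 1) = f (n + 1 + i); congr 1; omega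

def cylSet (f : ℕ → C) (n : ℕ) : Set (ℕ → C) := {g | ∀ k < n, g k = f k}

theorem isOpen_cylSet (f : ℕ → C) (n : ℕ) : IsOpen (cylSet f n) := by
  have h : cylSet f n = ⋂ k ∈ Finset.range n, {g : ℕ → C | g k = f k} := by
    ext g; simp [cylSet]
  rw [h]
  apply isOpen_biInter_finset
  intro k _
  show IsOpen ((fun g : ℕ → C => g k) ⁻¹' {f k})
  exact (isOpen_discrete _).preimage (continuous_apply k)

theorem exists_cylSet_subset {U : Set (ℕ → C)} (hU : IsOpen U) {f : ℕ → C} (hf : f ∈ U) :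
    ∃ n, cylSet f n ⊆ U := by
  obtain ⟨I, u, h1, h2⟩ := isOpen_pi_iff.1 hU f hf
  refine ⟨(I.sup id) + 1, fun g hg => h2 ?_⟩
  intro i hi
  have hgi : g i = f i := hg i (by
    have : i ≤ I.sup id := Finset.le_sup (f := id) hi
    omega)
  rw [hgi]
  exact (h1 i hi).2

def orbitCl (f : ℕ → C) : Set (ℕ → C) := closure (range fun m => shiftBy m f)

theorem self_mem_orbitCl (f : ℕ → C) : f ∈ orbitCl f :=
  subset_closure ⟨0, shiftBy_zero f⟩

theorem isClosed_orbitCl (f : ℕ → C) : IsClosed (orbitCl f) := isClosed_closure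

def InvS (K : Set (ℕ → C)) : Prop := ∀ w ∈ K, Sh w ∈ K

theorem invS_orbitCl (f : ℕ → C) : InvS (orbitCl f) := by
  intro w hw
  have h1 := image_closure_subset_closure_image (s := range fun m => shiftBy m f)
    (continuous_Sh (C := C))
  have h2 : Sh '' (range fun m => shiftBy m f) ⊆ range fun m => shiftBy m f := by
    rintro _ ⟨_, ⟨m, rfl⟩, rfl⟩
    exact ⟨m + 1, (Sh_shiftBy m f).symm⟩
  exact closure_mono h2 (h1 ⟨w, hw, rfl⟩)

theorem shiftBy_mem_of_mem {K : Set (ℕ → C)} (hK : InvS K) {w : ℕ → C} (hw : w ∈ K) (t : ℕ) :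
    shiftBy t w ∈ K := by
  induction t with
  | zero => rwa [shiftBy_zero]
  | succ n ih =>
      have := hK _ ih
      rwa [Sh_shiftBy] at this

theorem mem_orbitCl_iff {f g : ℕ → C} :
    g ∈ orbitCl f ↔ ∀ n, ∃ m, ∀ k < n, g k = f (m + k) := by
  constructor
  · intro hg n
    obtain ⟨x, hxc, hxr⟩ := mem_closure_iff.1 hg (cylSet g n) (isOpen_cylSet g n)
      (fun k _ => rfl)
    obtain ⟨m, rfl⟩ := hxr
    exact ⟨m, fun k hk => (hxc k hk).symm⟩
  · intro h
    rw [orbitCl, mem_closure_iff]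
    intro U hU hgU
    obtain ⟨n, hn⟩ := exists_cylSet_subset hU hgU
    obtain ⟨m, hm⟩ := h n
    exact ⟨shiftBy m f, hn (fun k hk => (hm k hk).symm), ⟨m, rfl⟩⟩

def IsMinSub (K : Set (ℕ → C)) : Prop :=
  K.Nonempty ∧ IsClosed K ∧ InvS K ∧
    ∀ K' ⊆ K, K'.Nonempty → IsClosed K' → InvS K' → K' = K

variable [Finite C]

theorem exists_minSub {K : Set (ℕ → C)} (hne : K.Nonempty) (hcl : IsClosed K)
    (hinv : InvS K) : ∃ M ⊆ K, IsMinSub M := by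
  classical
  set S : Set (Set (ℕ → C)) := {A | A.Nonempty ∧ IsClosed A ∧ InvS A} with hS
  have H : ∀ c ⊆ S, IsChain (· ⊆ ·) c → c.Nonempty → ∃ lb ∈ S, ∀ s ∈ c, lb ⊆ s := by
    intro c hcS hchain hcne
    haveI : Nonempty c := hcne.to_subtype
    have hdir : Directed (· ⊇ ·) (fun A : c => (A : Set (ℕ → C))) := by
      rintro A B
      rcases hchain.total A.2 B.2 with h | h
      · exact ⟨A, le_refl _, h⟩
      · exact ⟨B, h, le_refl _⟩
    have hne' : (⋂ A : c, (A : Set (ℕ → C))).Nonempty :=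
      IsCompact.nonempty_iInter_of_directed_nonempty_isCompact_isClosed
        (fun A : c => (A : Set (ℕ → C))) hdir (fun A => (hcS A.2).1)
        (fun A => (hcS A.2).2.1.isCompact) (fun A => (hcS A.2).2.1)
    refine ⟨⋂ A : c, (A : Set (ℕ → C)), ⟨hne', isClosed_iInter (fun A => (hcS A.2).2.1), ?_⟩, ?_⟩
    · intro w hw
      rw [mem_iInter] at hw ⊢
      exact fun A => (hcS A.2).2.2 w (hw A)
    · intro s hs
      exact iInter_subset (fun A : c => (A : Set (ℕ → C))) ⟨s, hs⟩
  obtain ⟨M, hMK, hMmin⟩ := zorn_superset_nonempty S H K ⟨hne, hcl, hinv⟩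
  refine ⟨M, hMK, hMmin.1.1, hMmin.1.2.1, hMmin.1.2.2, ?_⟩
  intro K' hsub hne' hcl' hinv'
  exact le_antisymm hsub (hMmin.2 ⟨hne', hcl', hinv'⟩ hsub)

theorem minSub_returns {M : Set (ℕ → C)} (hM : IsMinSub M) {U : Set (ℕ → C)} (hU : IsOpen U)
    (hne : (M ∩ U).Nonempty) : ∃ N, ∀ w ∈ M, ∃ n ≤ N, shiftBy n w ∈ U := by
  have hcov : M ⊆ ⋃ n : ℕ, (shiftBy n) ⁻¹' U := by
    by_contra hnc
    have hV : IsOpen (⋃ n : ℕ, (shiftBy (C := C) n) ⁻¹' U) :=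
      isOpen_iUnion fun n => hU.preimage (continuous_shiftBy n)
    set V := ⋃ n : ℕ, (shiftBy (C := C) n) ⁻¹' U with hVdef
    have hMV : M \ V = M := by
      apply hM.2.2.2 (M \ V) diff_subset
      · rw [Set.not_subset] at hnc
        obtain ⟨w, hwM, hwV⟩ := hnc
        exact ⟨w, hwM, hwV⟩
      · exact hM.2.1.sdiff hV
      · intro w hw
        refine ⟨hM.2.2.1 w hw.1, fun hSh => hw.2 ?_⟩
        rw [mem_iUnion] at hSh ⊢
        obtain ⟨n, hn⟩ := hSh
        refine ⟨n + 1, ?_⟩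
        show shiftBy (n + 1) w ∈ U
        rwa [← shiftBy_Sh]
    obtain ⟨x, hxM, hxU⟩ := hne
    have hxV : x ∈ V := mem_iUnion.2 ⟨0, by rwa [mem_preimage, shiftBy_zero]⟩
    rw [← hMV] at hxM
    exact hxM.2 hxV
  have hMc : IsCompact M := hM.2.1.isCompact
  obtain ⟨F, hF⟩ := hMc.elim_finite_subcover (fun n : ℕ => (shiftBy (C := C) n) ⁻¹' U)
    (fun n => hU.preimage (continuous_shiftBy n)) hcov
  refine ⟨F.sup id, fun w hw => ?_⟩
  obtain ⟨_, ⟨n, rfl⟩, _, ⟨hnF, rfl⟩, hmem⟩ := hF hw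
  exact ⟨n, Finset.le_sup (f := id) hnF, hmem⟩

theorem sap_orbitCl_min {y : ℕ → C} (hy : SAP y) : IsMinSub (orbitCl y) := by
  refine ⟨⟨y, self_mem_orbitCl y⟩, isClosed_orbitCl y, invS_orbitCl y, ?_⟩
  intro M' hsub hne hcl hinv
  have hyM' : y ∈ M' := by
    rw [← hcl.closure_eq]
    rw [mem_closure_iff]
    intro U hU hyU
    obtain ⟨n, hn⟩ := exists_cylSet_subset hU hyU
    obtain ⟨v, hv⟩ := hne
    obtain ⟨l, hl⟩ := hy (seg y 0 n) ⟨0, occursAt_seg _ _ _⟩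
    obtain ⟨m, hm⟩ := mem_orbitCl_iff.1 (hsub hv) l
    obtain ⟨i, hmi, hil, hocc⟩ := hl m
    rw [seg_length] at hil
    refine ⟨shiftBy (i - m) v, hn ?_, shiftBy_mem_of_mem hinv hv (i - m)⟩
    intro s hs
    show v (i - m + s) = y s
    have h1 : v (i - m + s) = y (m + (i - m + s)) := hm _ (by omega)
    have h2 : m + (i - m + s) = i + s := by omega
    rw [h1, h2]
    have := occursAt_iff.1 hocc s (by simpa using hs)
    rw [this, seg_getElem y 0 n s (by simpa using hs), Nat.zero_add]
  apply le_antisymm hsub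
  apply closure_minimal _ hcl
  rintro _ ⟨m, rfl⟩
  exact shiftBy_mem_of_mem hinv hyM' m

theorem minSub_word_SAP {M : Set (ℕ → C)} (hM : IsMinSub M) {w : ℕ → C} (hw : w ∈ M) :
    SAP w := by
  intro u hocc
  rcases Nat.eq_zero_or_pos u.length with h0 | hpos
  · rw [List.length_eq_zero_iff] at h0
    subst h0
    exact ⟨0, fun j => ⟨j, le_refl j, by simp, by simp [OccursAt, seg]⟩⟩
  obtain ⟨m, hm⟩ := hocc
  set fw : ℕ → C := fun s => u.getD s (w 0) with hfw
  have hUopen : IsOpen (cylSet fw u.length) := isOpen_cylSet _ _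
  have hmem : shiftBy m w ∈ cylSet fw u.length := by
    intro s hs
    show w (m + s) = u.getD s (w 0)
    rw [List.getD_eq_getElem u (w 0) hs]
    exact occursAt_iff.1 hm s hs
  obtain ⟨N, hN⟩ := minSub_returns hM hUopen
    ⟨shiftBy m w, shiftBy_mem_of_mem hM.2.2.1 hw m, hmem⟩
  refine ⟨N + u.length, fun j => ?_⟩
  obtain ⟨n, hnN, hnU⟩ := hN (shiftBy j w) (shiftBy_mem_of_mem hM.2.2.1 hw j)
  refine ⟨j + n, by omega, by omega, ?_⟩
  apply occursAt_iff.2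
  intro s hs
  have := hnU s hs
  show w (j + n + s) = u[s]
  have h2 : shiftBy n (shiftBy j w) s = w (j + n + s) := by
    show w (j + (n + s)) = w (j + n + s)
    congr 1; omega
  rw [← h2, this, hfw]
  exact List.getD_eq_getElem u (w 0) hs

end Dyn

section Core
open Set

theorem sap_group_cocycle {B G : Type*} [Finite B] [Finite G] [Group G]
    (y : ℕ → B) (hy : SAP y) (π : B → G) (g : ℕ → G) (hg0 : g 0 = 1)
    (hgs : ∀ n, g (n + 1) = π (y n) * g n) : SAP (fun n => (y n, g n)) := by
  classical
  letI tB : TopologicalSpace B := ⊥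
  haveI : DiscreteTopology B := ⟨rfl⟩
  letI tG : TopologicalSpace G := ⊥
  haveI : DiscreteTopology G := ⟨rfl⟩
  set z : ℕ → B × G := fun n => (y n, g n) with hz
  obtain ⟨M, hMZ, hMmin⟩ := exists_minSub (K := orbitCl z) ⟨z, self_mem_orbitCl z⟩
    (isClosed_orbitCl z) (invS_orbitCl z)
  -- every element of the orbit closure satisfies the cocycle relation
  have hcon : ∀ w ∈ orbitCl z, ∀ n, (w (n + 1)).2 = π (w n).1 * (w n).2 := by
    have hconcl : IsClosed {w : ℕ → B × G | ∀ n, (w (n + 1)).2 = π (w n).1 * (w n).2} := by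
      have hrw : {w : ℕ → B × G | ∀ n, (w (n + 1)).2 = π (w n).1 * (w n).2}
          = ⋂ n : ℕ, (fun w : ℕ → B × G => (w n, w (n + 1))) ⁻¹'
            {p : (B × G) × (B × G) | p.2.2 = π p.1.1 * p.1.2} := by
        ext w; simp [Set.mem_iInter, Set.mem_preimage]
      rw [hrw]
      exact isClosed_iInter fun n =>
        (isClosed_discrete _).preimage ((continuous_apply n).prodMk (continuous_apply (n + 1)))
    have hsub : (range fun m => shiftBy m z) ⊆
        {w : ℕ → B × G | ∀ n, (w (n + 1)).2 = π (w n).1 * (w n).2} := by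
      rintro _ ⟨m, rfl⟩ n
      show (z (m + (n + 1))).2 = π (z (m + n)).1 * (z (m + n)).2
      have : m + (n + 1) = (m + n) + 1 := by omega
      rw [this]
      exact hgs (m + n)
    exact fun w hw => closure_minimal hsub hconcl hw
  -- project to the first coordinate
  set pr : (ℕ → B × G) → (ℕ → B) := fun w i => (w i).1 with hpr
  have hprcont : Continuous pr := continuous_pi fun i => (continuous_apply i).fst
  have hXmin : IsMinSub (orbitCl y) := sap_orbitCl_min hy
  have hMcompact : IsCompact M := hMmin.2.1.isCompact
  have hprM : pr '' M = orbitCl y := by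
    apply hXmin.2.2.2 (pr '' M)
    · have h1 : pr '' M ⊆ pr '' orbitCl z := image_mono hMZ
      have h2 : pr '' orbitCl z ⊆ closure (pr '' (range fun m => shiftBy m z)) :=
        image_closure_subset_closure_image hprcont
      have h3 : pr '' (range fun m => shiftBy m z) ⊆ range fun m => shiftBy m y := by
        rintro _ ⟨_, ⟨m, rfl⟩, rfl⟩
        exact ⟨m, rfl⟩
      exact h1.trans (h2.trans (closure_mono h3))
    · exact hMmin.1.image pr
    · exact ((hMcompact.image hprcont)).isClosed
    · rintro _ ⟨w, hwM, rfl⟩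
      exact ⟨Sh w, hMmin.2.2.1 w hwM, rfl⟩
  have hy_mem : y ∈ pr '' M := by rw [hprM]; exact self_mem_orbitCl y
  obtain ⟨w, hwM, hwpr⟩ := hy_mem
  set k : G := (w 0).2 with hk
  have hcons := hcon w (hMZ hwM)
  have hwfst : ∀ n, (w n).1 = y n := fun n => congrFun hwpr n
  have hwval : ∀ n, (w n).2 = g n * k := by
    intro n
    induction n with
    | zero => rw [hg0, one_mul]
    | succ n ih => rw [hcons n, ih, hwfst n, hgs n, mul_assoc]
  -- translate back by k
  set ρ : (ℕ → B × G) → (ℕ → B × G) := fun v i => ((v i).1, (v i).2 * k⁻¹) with hρ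
  set ρ' : (ℕ → B × G) → (ℕ → B × G) := fun v i => ((v i).1, (v i).2 * k) with hρ'
  have hρcont : Continuous ρ := continuous_pi fun i =>
    (continuous_of_discreteTopology
      (f := fun c : B × G => (c.1, c.2 * k⁻¹))).comp (continuous_apply i)
  have hρ'cont : Continuous ρ' := continuous_pi fun i =>
    (continuous_of_discreteTopology
      (f := fun c : B × G => (c.1, c.2 * k))).comp (continuous_apply i)
  have hρz : ρ w = z := by
    funext i
    show ((w i).1, (w i).2 * k⁻¹) = (y i, g i)
    rw [hwfst, hwval, mul_inv_cancel_right]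
  have hρ'ρ : ∀ v, ρ' (ρ v) = v := by
    intro v; funext i
    show ((v i).1, (v i).2 * k⁻¹ * k) = v i
    rw [inv_mul_cancel_right]
  have hρρ' : ∀ v, ρ (ρ' v) = v := by
    intro v; funext i
    show ((v i).1, (v i).2 * k * k⁻¹) = v i
    rw [mul_inv_cancel_right]
  have hρSh : ∀ v, ρ (Sh v) = Sh (ρ v) := fun v => rfl
  have hρ'Sh : ∀ v, ρ' (Sh v) = Sh (ρ' v) := fun v => rfl
  set M' : Set (ℕ → B × G) := ρ '' M with hM'
  have hzM' : z ∈ M' := ⟨w, hwM, hρz⟩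
  have hM'min : IsMinSub M' := by
    refine ⟨⟨z, hzM'⟩, (hMcompact.image hρcont).isClosed, ?_, ?_⟩
    · rintro _ ⟨v, hv, rfl⟩
      exact ⟨Sh v, hMmin.2.2.1 v hv, (hρSh v).symm⟩
    · intro K' hsub hne hcl hinv
      have hK'M : ρ' '' K' = M := by
        apply hMmin.2.2.2 (ρ' '' K')
        · intro x hx
          obtain ⟨v, hvK', rfl⟩ := hx
          obtain ⟨u, huM, rfl⟩ := hsub hvK'
          rw [hρ'ρ]
          exact huM
        · exact hne.image ρ'
        · exact ((hcl.isCompact.image hρ'cont)).isClosed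
        · rintro _ ⟨v, hv, rfl⟩
          exact ⟨Sh v, hinv v hv, (hρ'Sh v).symm⟩
      have : ρ '' (ρ' '' K') = K' := by
        rw [Set.image_image]
        simp only [hρρ']
        exact Set.image_id K'
      rw [← this, hK'M]
  exact minSub_word_SAP hM'min hzM'

end Core

section Transducer
variable {σ δ q : Type*}

def transStates' {σ δ q : Type*} (f : q → σ → q × List δ) (q0 : q) (ω : ℕ → σ) : ℕ → q
  | 0 => q0
  | n + 1 => (f (transStates' f q0 ω n) (ω n)).1

def DT (f : q → σ → q × List δ) (u : List σ) (s : q) : q :=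
  u.foldl (fun s a => (f s a).1) s

theorem DT_append (f : q → σ → q × List δ) (u v : List σ) (s : q) :
    DT f (u ++ v) s = DT f v (DT f u s) := by
  simp [DT]

theorem seg_succ (x : ℕ → σ) (i n : ℕ) :
    seg x i (n + 1) = seg x i n ++ [x (i + n)] := by
  rw [seg_append x i n 1]
  simp [seg, List.range_succ]

theorem transStates'_eq_DT (f : q → σ → q × List δ) (r0 : q) (x : ℕ → σ) (n : ℕ) :
    transStates' f r0 x n = DT f (seg x 0 n) r0 := by
  induction n with
  | zero => simp [transStates', seg, DT]
  | succ n ih =>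
      rw [seg_succ, DT_append]
      show (f (transStates' f r0 x n) (x n)).1 = _
      rw [ih]
      simp [DT]

theorem transStates'_shift (f : q → σ → q × List δ) (q0 : q) (ω : ℕ → σ) (c n : ℕ) :
    transStates' f q0 ω (c + n) = transStates' f (transStates' f q0 ω c) (fun i => ω (c + i)) n := by
  induction n with
  | zero => rfl
  | succ n ih =>
      show transStates' f q0 ω ((c + n) + 1) = _
      rw [show ((c+n)+1) = (c+n)+1 from rfl]
      show (f (transStates' f q0 ω (c + n)) (ω (c + n))).1 = _
      rw [ih]
      rfl

theorem pair_word_eap {σ δ q : Type*} [Finite σ] [Finite q] (f : q → σ → q × List δ)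
    (x : ℕ → σ) (hx : SAP x) (r0 : q) :
    ∃ N : ℕ, SAP (fun m => (x (N + m), transStates' f r0 x (N + m))) := by
  classical
  haveI : Fintype q := Fintype.ofFinite q
  set stx : σ → q → q := fun a s => (f s a).1 with hstx
  set p : ℕ → q := fun n => transStates' f r0 x n with hp
  set F : ℕ → Finset q := fun n => Finset.image (DT f (seg x 0 n)) Finset.univ with hF
  have hFrel : ∀ m n : ℕ, m ≤ n → F n = Finset.image (DT f (seg x m (n - m))) (F m) := by
    intro m n hmn
    have hsplit : seg x 0 n = seg x 0 m ++ seg x m (n - m) := by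
      have h1 : n = m + (n - m) := by omega
      rw [h1, seg_append x 0 m (n - m)]
      congr 2 <;> omega
    simp only [hF]
    rw [hsplit, Finset.image_image]
    congr 1
    funext s
    exact DT_append f _ _ s
  have hcanti : ∀ m n : ℕ, m ≤ n → (F n).card ≤ (F m).card := by
    intro m n hmn
    rw [hFrel m n hmn]
    exact Finset.card_image_le
  -- stabilization
  obtain ⟨n1, hn1⟩ : ∃ n1, ∀ n, n1 ≤ n → (F n).card = (F n1).card := by
    have hne : (Set.range fun n => (F n).card).Nonempty := ⟨(F 0).card, 0, rfl⟩
    obtain ⟨n1, hn1⟩ := Nat.sInf_mem hne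
    change (F n1).card = _ at hn1
    refine ⟨n1, fun n hn => le_antisymm (hcanti n1 n hn) ?_⟩
    rw [hn1]
    exact Nat.sInf_le ⟨n, rfl⟩
  set d : ℕ := (F n1).card with hd
  have hpF : ∀ n, p n ∈ F n := by
    intro n
    simp only [hp, hF]
    rw [transStates'_eq_DT]
    exact Finset.mem_image_of_mem _ (Finset.mem_univ r0)
  have hd0 : 0 < d := Finset.card_pos.2 ⟨p n1, hpF n1⟩
  -- occurrences of the prefix of length n1
  obtain ⟨K, hK⟩ := hx (seg x 0 n1) ⟨0, occursAt_seg _ _ _⟩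
  have hKn1 : n1 ≤ K := by
    obtain ⟨i, h0i, hiK, _⟩ := hK 0
    rw [seg_length] at hiK
    omega
  -- locality of F
  have hloc : ∀ s n : ℕ, s + K ≤ n →
      Finset.image (DT f (seg x s (n - s))) Finset.univ = F n := by
    intro s n hsn
    obtain ⟨i, hsi, hiK, hocc⟩ := hK s
    rw [seg_length] at hiK
    have hnn1 : n1 ≤ n := by omega
    have hsub : F n ⊆ Finset.image (DT f (seg x s (n - s))) Finset.univ := by
      rw [hFrel s n (by omega)]
      exact Finset.image_subset_image (Finset.subset_univ _)
    apply (Finset.eq_of_subset_of_card_le hsub ?_).symm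
    rw [hn1 n hnn1]
    -- card of image of the window is at most d
    have hsplit1 : seg x s (n - s) = seg x s (i + n1 - s) ++ seg x (i + n1) (n - (i + n1)) := by
      have h1 : n - s = (i + n1 - s) + (n - (i + n1)) := by omega
      rw [h1, seg_append]
      congr 2 <;> omega
    have hsplit2 : seg x s (i + n1 - s) = seg x s (i - s) ++ seg x i n1 := by
      have h1 : i + n1 - s = (i - s) + n1 := by omega
      rw [h1, seg_append]
      congr 2 <;> omega
    have hv0 : seg x i n1 = seg x 0 n1 := by
      have := hocc
      unfold OccursAt at this
      rw [seg_length] at this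
      exact this
    calc (Finset.image (DT f (seg x s (n - s))) Finset.univ).card
        = (Finset.image (DT f (seg x (i + n1) (n - (i + n1))))
            (Finset.image (DT f (seg x s (i + n1 - s))) Finset.univ)).card := by
          rw [Finset.image_image]
          congr 1
          apply Finset.image_congr
          intro u _
          rw [hsplit1]
          exact DT_append f _ _ u
      _ ≤ (Finset.image (DT f (seg x s (i + n1 - s))) Finset.univ).card :=
          Finset.card_image_le
      _ = (Finset.image (DT f (seg x i n1))
            (Finset.image (DT f (seg x s (i - s))) Finset.univ)).card := by
          rw [Finset.image_image]
          congr 1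
          apply Finset.image_congr
          intro u _
          rw [hsplit2]
          exact DT_append f _ _ u
      _ ≤ (Finset.image (DT f (seg x i n1)) Finset.univ).card :=
          Finset.card_le_card (Finset.image_subset_image (Finset.subset_univ _))
      _ = d := by rw [hv0, hd]
  -- the sliding-block word
  set B := σ × Finset q with hB
  set Φ : List σ → B := fun u => (u.getD K (x 0), Finset.image (DT f (u.take K)) Finset.univ)
    with hΦ
  set Y : ℕ → B := fun m => (x (K + m), F (K + m)) with hY
  have hYsb : Y = fun m => Φ (seg x m (K + 1)) := by
    funext m
    simp only [hY, hΦ]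
    have h1 : (seg x m (K + 1)).getD K (x 0) = x (K + m) := by
      rw [List.getD_eq_getElem _ _ (by simp), seg_getElem x m (K+1) K (by omega)]
      congr 1
      omega
    have h2 : (seg x m (K + 1)).take K = seg x m K := by
      rw [seg_append x m K 1]
      exact List.take_left' (seg_length x m K)
    rw [h1, h2]
    have h4 := hloc m (m + K) (by omega)
    rw [show m + K - m = K by omega] at h4
    rw [h4, show m + K = K + m by omega]
  have hYsap : SAP Y := by
    rw [hYsb]
    exact sap_slidingBlock hx K Φ
  -- step maps are injective on F n for n ≥ n1
  have hFsucc : ∀ n, F (n + 1) = Finset.image (stx (x n)) (F n) := by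
    intro n
    have := hFrel n (n + 1) (by omega)
    rw [show n + 1 - n = 1 by omega] at this
    rw [this]
    apply Finset.image_congr
    intro s _
    show DT f (seg x n 1) s = stx (x n) s
    simp [seg, DT, hstx, List.range_succ]
  have hstep_inj : ∀ n, n1 ≤ n → Set.InjOn (stx (x n)) (F n) := by
    intro n hn
    apply Finset.card_image_iff.1
    rw [← hFsucc n, hn1 n hn, hn1 (n + 1) (by omega)]
  -- the finite permutation group machinery
  set eqv : (E : Finset q) → E.card = d → (↥E ≃ Fin d) :=
    fun E h => (E.equivFin).trans (finCongr h) with heqv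
  set φ : Finset q → q → Fin d := fun E s =>
    if h : E.card = d ∧ s ∈ E then eqv E h.1 ⟨s, h.2⟩ else ⟨0, hd0⟩ with hφ
  set ψ : Finset q → Fin d → q := fun E i =>
    if h : E.card = d then ((eqv E h).symm i : q) else r0 with hψ
  have hψφ : ∀ E s, E.card = d → s ∈ E → ψ E (φ E s) = s := by
    intro E s h1 h2
    simp only [hφ, hψ, dif_pos h1, dif_pos (And.intro h1 h2)]
    rw [Equiv.symm_apply_apply]
  have hψmem : ∀ E i, E.card = d → ψ E i ∈ E := by
    intro E i h
    simp only [hψ, dif_pos h]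
    exact ((eqv E h).symm i).2
  have hφψ : ∀ E i, E.card = d → φ E (ψ E i) = i := by
    intro E i h
    simp only [hφ, dif_pos (And.intro h (hψmem E i h))]
    have heq : (⟨ψ E i, hψmem E i h⟩ : ↥E) = (eqv E h).symm i := by
      apply Subtype.ext
      simp only [hψ, dif_pos h]
    rw [heq, Equiv.apply_symm_apply]
  set πc : B → Equiv.Perm (Fin d) := fun c =>
    if h : Function.Bijective (fun i => φ (Finset.image (stx c.1) c.2) (stx c.1 (ψ c.2 i)))
    then Equiv.ofBijective _ h else 1 with hπc
  -- the step identity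
  have hstepφ : ∀ n, K ≤ n → φ (F (n + 1)) (p (n + 1)) = πc (x n, F n) (φ (F n) (p n)) := by
    intro n hn
    have hnn1 : n1 ≤ n := le_trans hKn1 hn
    have hcard : (F n).card = d := hn1 n hnn1
    have hcard' : (F (n + 1)).card = d := hn1 (n + 1) (by omega)
    have hinj : Function.Injective
        (fun i => φ (Finset.image (stx (x n)) (F n)) (stx (x n) (ψ (F n) i))) := by
      intro i j hij
      simp only at hij
      rw [← hFsucc n] at hij
      have hmi : ψ (F n) i ∈ F n := hψmem _ _ hcard
      have hmj : ψ (F n) j ∈ F n := hψmem _ _ hcard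
      have hsi : stx (x n) (ψ (F n) i) ∈ F (n + 1) := by
        rw [hFsucc n]; exact Finset.mem_image_of_mem _ hmi
      have hsj : stx (x n) (ψ (F n) j) ∈ F (n + 1) := by
        rw [hFsucc n]; exact Finset.mem_image_of_mem _ hmj
      have h1 : stx (x n) (ψ (F n) i) = stx (x n) (ψ (F n) j) := by
        have := congrArg (ψ (F (n + 1))) hij
        rwa [hψφ _ _ hcard' hsi, hψφ _ _ hcard' hsj] at this
      have h2 : ψ (F n) i = ψ (F n) j := hstep_inj n hnn1 hmi hmj h1
      have := congrArg (φ (F n)) h2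
      rwa [hφψ _ _ hcard, hφψ _ _ hcard] at this
    have hbij := Finite.injective_iff_bijective.1 hinj
    have hπeq : πc (x n, F n) = Equiv.ofBijective _ hbij := by
      simp only [hπc]
      rw [dif_pos hbij]
    rw [hπeq]
    show φ (F (n + 1)) (p (n + 1)) =
      φ (Finset.image (stx (x n)) (F n)) (stx (x n) (ψ (F n) (φ (F n) (p n))))
    rw [hψφ _ _ hcard (hpF n), ← hFsucc n]
    rfl
  -- the cocycle
  set gseq : ℕ → Equiv.Perm (Fin d) := fun m =>
    Nat.rec 1 (fun m gm => πc (Y m) * gm) m with hgseq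
  have hgs : ∀ m, gseq (m + 1) = πc (Y m) * gseq m := fun m => rfl
  have hcore : SAP (fun m => (Y m, gseq m)) :=
    sap_group_cocycle Y hYsap πc gseq rfl hgs
  have hPtrack : ∀ m, φ (F (K + m)) (p (K + m)) = gseq m (φ (F K) (p K)) := by
    intro m
    induction m with
    | zero => rfl
    | succ m ih =>
        have h1 : K + (m + 1) = (K + m) + 1 := by omega
        rw [h1, hstepφ (K + m) (by omega), ih, hgs m, Equiv.Perm.mul_apply]
  -- map down to the pair word
  refine ⟨K, ?_⟩
  have hmap := sap_map hcore
    (fun c : B × Equiv.Perm (Fin d) => (c.1.1, ψ c.1.2 (c.2 (φ (F K) (p K)))))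
  have hfinal : (fun n => (fun c : B × Equiv.Perm (Fin d) =>
        (c.1.1, ψ c.1.2 (c.2 (φ (F K) (p K))))) ((fun n => (Y n, gseq n)) n))
      = fun m => (x (K + m), transStates' f r0 x (K + m)) := by
    funext m
    show ((Y m).1, ψ (Y m).2 (gseq m (φ (F K) (p K)))) = (x (K + m), p (K + m))
    show (x (K + m), ψ (F (K + m)) (gseq m (φ (F K) (p K)))) = (x (K + m), p (K + m))
    rw [← hPtrack m, hψφ _ _ (hn1 _ (by omega)) (hpF (K + m))]
  rwa [hfinal] at hmap

end Transducer

section Main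

theorem seg_getD {α : Type*} (ω : ℕ → α) (i n t : ℕ) (d : α) (h : t < n) :
    (seg ω i n).getD t d = ω (i + t) := by
  rw [List.getD_eq_getElem _ _ (by simpa using h), seg_getElem ω i n t h]

theorem transStates'_eq_transStates {σ δ q : Type*} (f : q → σ → q × List δ) (q0 : q)
    (ω : ℕ → σ) : ∀ n, transStates' f q0 ω n = transStates f q0 ω n
  | 0 => rfl
  | n + 1 => by
      show (f (transStates' f q0 ω n) (ω n)).1 = (f (transStates f q0 ω n) (ω n)).1
      rw [transStates'_eq_transStates f q0 ω n]


/-- Finite transducers preserve eventual strong almost periodicity (when the output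
is infinite). `ν` is the infinite output word: every prefix of `ν` of length
`|v_0 ⋯ v_{n-1}|` equals `v_0 ⋯ v_{n-1}`, and these lengths are unbounded. -/
theorem eap_transducer {σ δ q : Type*} [Finite σ] [Finite δ] [Finite q]
    (f : q → σ → q × List δ) (q0 : q) (ω : ℕ → σ) (h : EAP ω) (ν : ℕ → δ)
    (hpre : ∀ n, seg ν 0 (transPartial f q0 ω n).length = transPartial f q0 ω n)
    (hinf : ∀ m, ∃ n, m ≤ (transPartial f q0 ω n).length) :
    EAP ν := by
  classical
  obtain ⟨ns, hsap⟩ := h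
  set x : ℕ → σ := fun i => ω (ns + i) with hx
  set r0 : q := transStates' f q0 ω ns with hr0
  obtain ⟨N, hpair⟩ := pair_word_eap f x hsap r0
  set N1 : ℕ := ns + N with hN1def
  set st : ℕ → q := fun n => transStates f q0 ω n with hst
  set W : ℕ → σ × q := fun n => (ω n, st n) with hW
  set T : ℕ → σ × q := fun m => W (N1 + m) with hTdef
  have hT : SAP T := by
    have hfun : T = fun m => (x (N + m), transStates' f r0 x (N + m)) := by
      funext m
      simp only [hTdef, hW, hst, hx, hr0]
      refine Prod.ext ?_ ?_
      · show ω (N1 + m) = ω (ns + (N + m))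
        congr 1
        omega
      · show transStates f q0 ω (N1 + m)
          = transStates' f (transStates' f q0 ω ns) (fun i => ω (ns + i)) (N + m)
        rw [← transStates'_eq_transStates, ← transStates'_shift f q0 ω ns (N + m)]
        congr 1
        omega
    rw [hfun]
    exact hpair
  -- blocks and partial output lengths
  set b : ℕ → List δ := fun n => (f (st n) (ω n)).2 with hb
  set L : ℕ → ℕ := fun n => (transPartial f q0 ω n).length with hLdef
  have htp_succ : ∀ n, transPartial f q0 ω (n + 1) = transPartial f q0 ω n ++ b n := by
    intro n
    simp only [transPartial, List.range_succ, List.map_append, List.flatten_append]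
    simp [hb, hst]
  have hLsucc : ∀ n, L (n + 1) = L n + (b n).length := by
    intro n
    simp only [hLdef, htp_succ n, List.length_append]
  have hmono : ∀ m n : ℕ, m ≤ n → L m ≤ L n := by
    intro m n hmn
    induction n, hmn using Nat.le_induction with
    | base => exact le_rfl
    | succ n hmn ih => rw [hLsucc]; omega
  have hδne : Nonempty δ := by
    obtain ⟨n, hn⟩ := hinf 1
    cases hlist : transPartial f q0 ω n with
    | nil => rw [hlist] at hn; simp at hn
    | cons a tl => exact ⟨a⟩
  obtain ⟨d0⟩ := hδne
  have hνblock : ∀ n r, r < (b n).length → ν (L n + r) = (b n).getD r d0 := by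
    intro n r hr
    have h1 : L n + r < L (n + 1) := by rw [hLsucc]; omega
    have h2 := congrArg (fun l => l.getD (L n + r) d0) (hpre (n + 1))
    rw [seg_getD ν 0 _ (L n + r) d0 (by simpa only [hLdef] using h1)] at h2
    rw [htp_succ n, List.getD_append_right _ _ _ _
      (show (transPartial f q0 ω n).length ≤ L n + r by simp only [hLdef]; omega)] at h2
    rw [Nat.zero_add] at h2
    rw [h2]
    congr 1
    simp only [hLdef]
    omega
  have hLdiff : ∀ n n' t : ℕ, (∀ s < t, b (n + s) = b (n' + s)) →
      L (n + t) - L n = L (n' + t) - L n' := by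
    intro n n' t
    induction t with
    | zero => intro _; simp
    | succ t ih =>
        intro hbl
        rw [show n + (t + 1) = (n + t) + 1 by omega, show n' + (t + 1) = (n' + t) + 1 by omega,
          hLsucc, hLsucc, hbl t (by omega)]
        have h3 := ih (fun s hs => hbl s (by omega))
        have h4 := hmono n (n + t) (by omega)
        have h5 := hmono n' (n' + t) (by omega)
        omega
  have htrans : ∀ t n n' o : ℕ, (∀ s < t, b (n + s) = b (n' + s)) →
      L n + o < L (n + t) → ν (L n + o) = ν (L n' + o) := by
    intro t
    induction t with
    | zero =>
        intro n n' o _ hlt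
        rw [show n + 0 = n by omega] at hlt
        omega
    | succ t ih =>
        intro n n' o hbl hlt
        rcases Nat.lt_or_ge (L n + o) (L (n + t)) with hc | hc
        · exact ih n n' o (fun s hs => hbl s (by omega)) hc
        · have hmn : L n ≤ L (n + t) := hmono _ _ (by omega)
          have hmn' : L n' ≤ L (n' + t) := hmono _ _ (by omega)
          set r : ℕ := L n + o - L (n + t) with hrdef
          have heq1 : L n + o = L (n + t) + r := by omega
          have hsucc1 : L (n + (t + 1)) = L (n + t) + (b (n + t)).length := by
            rw [show n + (t + 1) = (n + t) + 1 by omega, hLsucc]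
          have hr : r < (b (n + t)).length := by omega
          have hdiff := hLdiff n n' t (fun s hs => hbl s (by omega))
          have heq2 : L n' + o = L (n' + t) + r := by omega
          rw [heq1, heq2, hνblock _ _ hr,
            hνblock _ _ (show r < (b (n' + t)).length by rw [← hbl t (by omega)]; exact hr)]
          rw [hbl t (by omega)]
  -- a syndetic supply of nonempty blocks
  have hbW : ∀ n, b n = (f (W n).2 (W n).1).2 := fun n => rfl
  have hexb : ∃ n0, (b (N1 + n0)).length ≠ 0 := by
    by_contra hall
    push_neg at hall
    have hallz : ∀ t, L (N1 + t) = L N1 := by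
      intro t
      induction t with
      | zero => rfl
      | succ t ih =>
          rw [show N1 + (t + 1) = (N1 + t) + 1 by omega, hLsucc]
          have := hall t
          omega
    obtain ⟨n, hn⟩ := hinf (L N1 + 1)
    have hn' : L N1 + 1 ≤ L n := hn
    rcases Nat.le_total n N1 with hc | hc
    · have := hmono n N1 hc
      omega
    · have h2 : L n = L N1 := by
        have := hallz (n - N1)
        rwa [show N1 + (n - N1) = n by omega] at this
      omega
  obtain ⟨n0, hn0⟩ := hexb
  obtain ⟨lc, hlc⟩ := hT [T n0] ⟨n0, by
    show seg T n0 1 = [T n0]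
    simp [seg, List.range_succ]⟩
  have hlc1 : 1 ≤ lc := by
    obtain ⟨i, h1, h2, _⟩ := hlc 0
    simp only [List.length_singleton] at h2
    omega
  have hgrow : ∀ s, L (N1 + s) + 1 ≤ L (N1 + s + lc) := by
    intro s
    obtain ⟨i, h1, h2, hocc⟩ := hlc s
    simp only [List.length_singleton] at h2
    have hTi : T i = T n0 := by
      have := occursAt_iff.1 hocc 0 (by simp)
      simpa using this
    have hbne : (b (N1 + i)).length ≠ 0 := by
      rw [hbW (N1 + i), show W (N1 + i) = T i from rfl, hTi,
        show T n0 = W (N1 + n0) from rfl, ← hbW (N1 + n0)]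
      exact hn0
    have e1 : L (N1 + i) + 1 ≤ L (N1 + i + 1) := by rw [hLsucc]; omega
    have e2 : L (N1 + s) ≤ L (N1 + i) := hmono _ _ (by omega)
    have e3 : L (N1 + i + 1) ≤ L (N1 + s + lc) := hmono _ _ (by omega)
    omega
  have hgrowK : ∀ s k, L (N1 + s) + k ≤ L (N1 + s + k * lc) := by
    intro s k
    induction k with
    | zero => simp
    | succ k ih =>
        have hg := hgrow (s + k * lc)
        rw [show N1 + (s + k * lc) = N1 + s + k * lc by omega] at hg
        have hmul : (k + 1) * lc = k * lc + lc := by ring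
        have e3 : N1 + s + (k + 1) * lc = N1 + s + k * lc + lc := by omega
        rw [e3]
        omega
  -- uniform bound on block lengths
  haveI : Fintype (σ × q) := Fintype.ofFinite _
  set Bmax : ℕ := Finset.sup Finset.univ (fun c : σ × q => ((f c.2 c.1).2).length)
    with hBmax
  have hBbound : ∀ n, (b n).length ≤ Bmax := by
    intro n
    rw [hbW n]
    exact Finset.le_sup (f := fun c : σ × q => ((f c.2 c.1).2).length) (Finset.mem_univ (W n))
  have hLadd : ∀ m t : ℕ, L (m + t) ≤ L m + Bmax * t := by
    intro m t
    induction t with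
    | zero => simp
    | succ t ih =>
        rw [show m + (t + 1) = (m + t) + 1 by omega, hLsucc]
        have := hBbound (m + t)
        have hmul : Bmax * (t + 1) = Bmax * t + Bmax := by ring
        omega
  -- locate the block containing a given position
  have hfind : ∀ j, L N1 ≤ j → ∃ n, N1 ≤ n ∧ L n ≤ j ∧ j < L (n + 1) := by
    intro j hj
    have hT0P : ¬ (L (N1 + (j + 1) * lc) ≤ j) := by
      have := hgrowK 0 (j + 1)
      rw [show N1 + 0 = N1 by omega] at this
      omega
    set P : ℕ → Prop := fun t => L (N1 + t) ≤ j with hP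
    set T0 : ℕ := (j + 1) * lc with hT0
    set t0 := Nat.findGreatest P T0 with ht0def
    have ht0P : P t0 := Nat.findGreatest_spec (m := 0) (Nat.zero_le T0)
      (by simp only [hP]; rw [show N1 + 0 = N1 by omega]; exact hj)
    have ht0le : t0 ≤ T0 := Nat.findGreatest_le T0
    have ht0lt : t0 < T0 := lt_of_le_of_ne ht0le (fun he => hT0P (he ▸ ht0P))
    have hnext : ¬ P (t0 + 1) :=
      Nat.findGreatest_is_greatest (by rw [← ht0def]; omega) (by omega)
    simp only [hP] at ht0P hnext
    refine ⟨N1 + t0, by omega, ht0P, ?_⟩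
    rw [show N1 + t0 + 1 = N1 + (t0 + 1) by omega]
    omega
  -- the suffix of ν
  refine ⟨L N1, ?_⟩
  set ν' : ℕ → δ := fun t => ν (L N1 + t) with hν'
  intro v hvocc
  rcases Nat.eq_zero_or_pos v.length with hk0 | hkpos
  · rw [List.length_eq_zero_iff] at hk0
    subst hk0
    exact ⟨0, fun j => ⟨j, le_rfl, by simp, by simp [OccursAt, seg]⟩⟩
  obtain ⟨m0, hm0⟩ := hvocc
  set k := v.length with hkdef
  set j0 : ℕ := L N1 + m0 with hj0
  obtain ⟨n, hN1n, hLn, hLn1⟩ := hfind j0 (by omega)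
  set r : ℕ := j0 - L n with hrdef
  have hrb : r < (b n).length := by
    have := hLsucc n
    omega
  set tspan : ℕ := 1 + k * lc with htspan
  have hcover : L n + (r + k) ≤ L (n + tspan) := by
    have h1 := hgrowK (n - N1 + 1) k
    rw [show N1 + (n - N1 + 1) = n + 1 by omega] at h1
    rw [show n + 1 + k * lc = n + tspan by omega] at h1
    have h2 : L n + r < L (n + 1) := by omega
    omega
  set u := seg T (n - N1) tspan with hu
  obtain ⟨lu, hlu⟩ := hT u ⟨n - N1, occursAt_seg T (n - N1) tspan⟩
  have hulen : u.length = tspan := seg_length T (n - N1) tspan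
  -- the result
  refine ⟨Bmax * (1 + lu + tspan) + 1, fun j => ?_⟩
  set j' : ℕ := L N1 + j with hj'
  obtain ⟨n'', hN1n'', hLn'', hLn''1⟩ := hfind j' (by omega)
  obtain ⟨I, hI1, hI2, hIocc⟩ := hlu ((n'' + 1) - N1)
  rw [hulen] at hI2
  set n' : ℕ := N1 + I with hn'def
  have hn'ge : n'' + 1 ≤ n' := by omega
  have hoccu : OccursAt T u (n - N1) := by
    rw [hu]
    exact occursAt_seg T (n - N1) tspan
  have hblocks : ∀ s < tspan, b (n' + s) = b (n + s) := by
    intro s hs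
    have hTs : T (I + s) = T ((n - N1) + s) := by
      have h1 := occursAt_iff.1 hIocc s (by rw [hulen]; omega)
      have h2 := occursAt_iff.1 hoccu s (by rw [hulen]; omega)
      exact h1.trans h2.symm
    have hWs : W (n' + s) = W (n + s) := by
      have e1 : n' + s = N1 + (I + s) := by omega
      have e2 : n + s = N1 + ((n - N1) + s) := by omega
      rw [e1, e2]
      exact hTs
    rw [hbW (n' + s), hbW (n + s), hWs]
  have hLn'd : ∀ s ≤ tspan, L (n' + s) - L n' = L (n + s) - L n := fun s hs =>
    hLdiff n' n s (fun q hq => hblocks q (by omega))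
  -- absolute position of the new occurrence
  have hLN1n' : L N1 ≤ L n' := hmono _ _ (by omega)
  have hLN1n : L N1 ≤ L n := hmono _ _ (by omega)
  set a : ℕ := L n' + r with ha
  have haj' : j' < a := by
    have : L (n'' + 1) ≤ L n' := hmono _ _ hn'ge
    omega
  set i' : ℕ := a - L N1 with hi'
  have hmono' : L n' ≤ L (n' + tspan) := hmono _ _ (by omega)
  have hmono'' : L n ≤ L (n + tspan) := hmono _ _ (by omega)
  have hcover' : L n' + (r + k) ≤ L (n' + tspan) := by
    have := hLn'd tspan (le_refl tspan)
    omega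
  refine ⟨i', by omega, ?_, ?_⟩
  · -- length bound
    have hb1 : L (n' + tspan) ≤ L (n'' + 1 + lu + tspan) := hmono _ _ (by omega)
    have hb2 : L (n'' + 1 + lu + tspan) ≤ L (n'' + 1) + Bmax * (lu + tspan) := by
      have := hLadd (n'' + 1) (lu + tspan)
      rw [show n'' + 1 + (lu + tspan) = n'' + 1 + lu + tspan by omega] at this
      exact this
    have hb3 : L (n'' + 1) ≤ L n'' + Bmax := by
      rw [hLsucc]
      have := hBbound n''
      omega
    have hmul : Bmax * (1 + lu + tspan) = Bmax + Bmax * (lu + tspan) := by ring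
    omega
  · -- the occurrence itself
    apply occursAt_iff.2
    intro t ht
    show ν (L N1 + (i' + t)) = v[t]
    have e1 : L N1 + (i' + t) = L n' + (r + t) := by omega
    rw [e1]
    have e2 : ν (L n' + (r + t)) = ν (L n + (r + t)) :=
      htrans tspan n' n (r + t) hblocks (by omega)
    rw [e2]
    have e3 : L n + (r + t) = L N1 + (m0 + t) := by omega
    rw [e3]
    exact occursAt_iff.1 hm0 t ht

end Main
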